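/- Let D and B be matrices of compatible sizes and N = D L_B with L_B = I - B† B. Then the rank of the block matrix stacking R_D = I - D D† on top of R_N = I - N N† equals rank(R_N). Consequently there exists a matrix U with R_D = U R_N. -/

import Mathlib

open Matrix

/-- With N = D L_B, rank [R_D; R_N] = rank R_N, and hence R_D = U R_N for some U. -/
theorem stmt5 {m n p : ℕ}
    (D : Matrix (Fin m) (Fin n) ℂ) (B : Matrix (Fin p) (Fin n) ℂ)
    (Bdag : Matrix (Fin n) (Fin p) ℂ)
    (hB1 : B * Bdag * B = B) (hB2 : Bdag * B * Bdag = Bdag)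
    (hB3 : (B * Bdag)ᴴ = B * Bdag) (hB4 : (Bdag * B)ᴴ = Bdag * B)
    (Ddag : Matrix (Fin n) (Fin m) ℂ)
    (hD1 : D * Ddag * D = D) (hD2 : Ddag * D * Ddag = Ddag)
    (hD3 : (D * Ddag)ᴴ = D * Ddag) (hD4 : (Ddag * D)ᴴ = Ddag * D)
    (N : Matrix (Fin m) (Fin n) ℂ) (hN : N = D * (1 - Bdag * B))
    (Ndag : Matrix (Fin n) (Fin m) ℂ)
    (hN1 : N * Ndag * N = N) (hN2 : Ndag * N * Ndag = Ndag)
    (hN3 : (N * Ndag)ᴴ = N * Ndag) (hN4 : (Ndag * N)ᴴ = Ndag * N) :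
    (Matrix.fromRows (1 - D * Ddag) (1 - N * Ndag)).rank = (1 - N * Ndag).rank ∧
      ∃ U : Matrix (Fin m) (Fin m) ℂ, 1 - D * Ddag = U * (1 - N * Ndag) := by
  have key1 : (1 - D * Ddag) * N = 0 := by
    rw [hN, Matrix.sub_mul, Matrix.one_mul, ← Matrix.mul_assoc, hD1, sub_self]
  have key2 : (1 - D * Ddag) = (1 - D * Ddag) * (1 - N * Ndag) := by
    rw [Matrix.mul_sub, Matrix.mul_one, ← Matrix.mul_assoc, key1, Matrix.zero_mul, sub_zero]
  have h1 : fromRows (1 - D * Ddag) (1 - N * Ndag)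
      = fromRows (1 - D * Ddag) 1 * (1 - N * Ndag) := by
    rw [fromRows_mul, ← key2, Matrix.one_mul]
  have h2 : (1 - N * Ndag) =
      Matrix.fromCols (0 : Matrix (Fin m) (Fin m) ℂ) (1 : Matrix (Fin m) (Fin m) ℂ) * fromRows (1 - D * Ddag) (1 - N * Ndag) := by
    rw [fromCols_mul_fromRows, Matrix.zero_mul, Matrix.one_mul, zero_add]
  refine ⟨le_antisymm ?_ ?_, ⟨1 - D * Ddag, key2⟩⟩
  · rw [h1]; exact rank_mul_le_right _ _
  · conv_lhs => rw [h2]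
    exact rank_mul_le_right _ _
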